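/- For any even n ≥ 6, the product (r_n r_3)^4 equals the identity permutation of {1,...,n}; hence the Cayley graph Cay(Sym_n, {r_3, r_{n-2}, r_n}) contains a cycle of length 8. -/
import Mathlib

def pancakeRev (n m : ℕ) : Equiv.Perm (Fin n) :=
  Function.Involutive.toPerm
    (fun a => if h : a.val < m ∧ m ≤ n then ⟨m - 1 - a.val, by omega⟩ else a)
    (by
      intro a
      beta_reduce
      by_cases h : a.val < m ∧ m ≤ n
      · rw [dif_pos h]
        have h2 : m - 1 - a.val < m ∧ m ≤ n := by omega
        rw [dif_pos h2]
        apply Fin.ext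
        simp
        omega
      · rw [dif_neg h, dif_neg h])

lemma pancakeRev_val (n m : ℕ) (a : Fin n) :
    (pancakeRev n m a).val = if a.val < m ∧ m ≤ n then m - 1 - a.val else a.val := by
  show (dite _ _ _ : Fin n).val = _
  split_ifs with h
  · rfl
  · rfl

theorem pancake_C8_BS3 (n : ℕ) (heven : Even n) (hn : 6 ≤ n) :
    (pancakeRev n n * pancakeRev n 3) ^ 4 = 1 := by
  obtain ⟨k, hk⟩ := heven
  set g := pancakeRev n n * pancakeRev n 3 with hg
  have hval : ∀ a : Fin n, (g a).val =
      if a.val < 3 then n - 3 + a.val else n - 1 - a.val := by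
    intro a
    have ha := a.isLt
    rw [hg]
    rw [Equiv.Perm.mul_apply, pancakeRev_val, pancakeRev_val]
    split_ifs <;> omega
  ext a
  rw [show g ^ 4 = g * (g * (g * g)) by rw [pow_succ, pow_succ, pow_succ, pow_one]; group]
  simp only [Equiv.Perm.mul_apply, Equiv.Perm.coe_one, id_eq]
  have h1 := hval a
  have h2 := hval (g a)
  have h3 := hval (g (g a))
  have h4 := hval (g (g (g a)))
  have b1 := (g a).isLt
  have b2 := (g (g a)).isLt
  have b3 := (g (g (g a))).isLt
  have ha := a.isLt
  split_ifs at h1 h2 h3 h4 <;> omega
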